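/- Let $p$ be a prime and $a,b,N$ integers coprime to $p$. If $g$ is a primitive root mod $p$ with $a\equiv g^{c_1}$, $b\equiv g^{c_2} \pmod p$, then the system $a^{x_1}b^{x_2}\equiv 1$, $a^{x_2}b^{x_3}\equiv a^N \pmod p$ has an integer solution $(x_1,x_2,x_3)$. -/

import Mathlib

/-- Let `p` be prime and `a, b, N` integers with `a, b` coprime to `p`.
If `g` is a primitive root mod `p` (a generator of `(ZMod p)ˣ`) with `a ≡ g^{c₁}` and
`b ≡ g^{c₂} (mod p)`, then the system `a^{x₁} b^{x₂} ≡ 1` and `a^{x₂} b^{x₃} ≡ a^N (mod p)`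
has an integer solution `(x₁, x₂, x₃)` (exponentiation via `zpow` in the field `ZMod p`). -/
theorem two_base_system_solvable (p : ℕ) [Fact p.Prime] (a b N : ℤ)
    (ha : ¬ ((p : ℤ) ∣ a)) (hb : ¬ ((p : ℤ) ∣ b))
    (g : (ZMod p)ˣ) (hg : ∀ x : (ZMod p)ˣ, x ∈ Subgroup.zpowers g)
    (c1 c2 : ℤ) (h1 : (a : ZMod p) = ((g : ZMod p)) ^ c1)
    (h2 : (b : ZMod p) = ((g : ZMod p)) ^ c2) :
    ∃ x1 x2 x3 : ℤ,
      (a : ZMod p) ^ x1 * (b : ZMod p) ^ x2 = 1 ∧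
      (a : ZMod p) ^ x2 * (b : ZMod p) ^ x3 = (a : ZMod p) ^ N := by
  have hgne : (g : ZMod p) ≠ 0 := g.ne_zero
  -- first, find an exact integer solution of the linear system
  have key : ∃ x1 x2 x3 : ℤ, c1 * x1 + c2 * x2 = 0 ∧ c1 * x2 + c2 * x3 = c1 * N := by
    by_cases h0 : c1 = 0 ∧ c2 = 0
    · exact ⟨0, 0, 0, by simp [h0.1, h0.2], by simp [h0.1, h0.2]⟩
    · set d : ℤ := (Int.gcd c1 c2 : ℤ) with hd
      have hdpos : 0 < Int.gcd c1 c2 := Int.gcd_pos_iff.mpr (by tauto)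
      set c1' : ℤ := c1 / d with hc1'
      set c2' : ℤ := c2 / d with hc2'
      have hc1 : d * c1' = c1 := Int.mul_ediv_cancel' (Int.gcd_dvd_left c1 c2)
      have hc2 : d * c2' = c2 := Int.mul_ediv_cancel' (Int.gcd_dvd_right c1 c2)
      have hcop : IsCoprime c1' c2' :=
        Int.isCoprime_iff_gcd_eq_one.mpr (Int.gcd_div_gcd_div_gcd hdpos)
      obtain ⟨u, v, huv⟩ := hcop.pow_right (n := 2)
      -- u * c1' + v * c2'^2 = 1
      refine ⟨u * (-c2' * N), N + c2' * (v * (-c2' * N)), -c1' * (v * (-c2' * N)), ?_, ?_⟩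
      · have key2 : c1' * (u * (-c2' * N)) + c2' ^ 2 * (v * (-c2' * N)) = -c2' * N := by
          linear_combination (-c2' * N) * huv
        rw [← hc1, ← hc2]
        linear_combination d * key2
      · rw [← hc1, ← hc2]; ring
  obtain ⟨x1, x2, x3, e1, e2⟩ := key
  refine ⟨x1, x2, x3, ?_, ?_⟩
  · rw [h1, h2, ← zpow_mul, ← zpow_mul, ← zpow_add₀ hgne, e1, zpow_zero]
  · rw [h1, h2, ← zpow_mul, ← zpow_mul, ← zpow_mul, ← zpow_add₀ hgne, e2]
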